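/- For G = PGL_2 over F with diagonal torus A acting on both sides, the algebra of bi-A-invariant regular functions on G is generated by the function [a b; c d] ↦ bc/(ad − bc); consequently the invariant-theoretic quotient C^G_{A,A} = Spec F[G]^{A×A} is isomorphic to the affine line A^1. -/

import Mathlib

/-!
STATEMENT 13: For `G = PGL₂` with diagonal torus `A` acting on both sides,
the algebra of bi-`A`-invariant regular functions on `G` is generated by
`[a b; c d] ↦ bc/(ad − bc)`; consequently
`C^G_{A,A} = Spec F[G]^{A×A} ≅ 𝔸¹`.

Concrete model: `F[GL₂] = GL2Ring F` is the localization of the polynomial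
ring `F[x_{ij}]` at the determinant `detPoly = x₀₀x₁₁ − x₀₁x₁₀`, and
`F[PGL₂]^{A×A} = F[GL₂]^{A×A×𝔾_m}` is the subset of elements invariant under
all the scalings `x_{ij} ↦ tᵢ uⱼ x_{ij}` (`t, u ∈ (Fˣ)²`; this includes the
central `𝔾_m`, so these are exactly the bi-`A`-invariant functions on
`PGL₂`).  The scaling action on the localization is the ring map `scale t u`
characterized by `hscale`.  The function `bc/(ad−bc)` is `bcOverDet`.
Note that the function field `F = k(X)` is infinite, which is recorded by
the hypothesis `[Infinite F]` (so that invariance under `Fˣ`-points agrees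
with scheme-theoretic invariance under the torus).

Conclusion: the set of invariants is exactly the `F`-subalgebra generated by
`bcOverDet`, and that subalgebra is a polynomial ring in one variable, i.e.
`C^G_{A,A} ≅ 𝔸¹`.
-/

open MvPolynomial

noncomputable section

/-- The coordinate ring of the space of 2×2 matrices. -/
abbrev GL2Coord (F : Type) [Field F] : Type := MvPolynomial (Fin 2 × Fin 2) F

/-- The determinant `x₀₀x₁₁ − x₀₁x₁₀`. -/
def detPoly (F : Type) [Field F] : GL2Coord F :=
  X (0, 0) * X (1, 1) - X (0, 1) * X (1, 0)

/-- The coordinate ring `F[GL₂]`, the localization away from the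
determinant. -/
abbrev GL2Ring (F : Type) [Field F] : Type := Localization.Away (detPoly F)

/-- The inverse of the determinant in `F[GL₂]`. -/
def invDet (F : Type) [Field F] : GL2Ring F :=
  IsLocalization.Away.invSelf (detPoly F)

/-- The regular function `[a b; c d] ↦ bc/(ad − bc)` on `GL₂`, which descends
to `PGL₂` and is bi-`A`-invariant. -/
def bcOverDet (F : Type) [Field F] : GL2Ring F :=
  algebraMap (GL2Coord F) (GL2Ring F) (X (0, 1) * X (1, 0)) * invDet F

/-- Scaling of the matrix entries, `x_{ij} ↦ tᵢ uⱼ x_{ij}`, i.e. the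
coaction of `A × A` (together with the center) on `F[GL₂]`. -/
def scaleHom (F : Type) [Field F] (t u : Fin 2 → Fˣ) :
    GL2Coord F →ₐ[F] GL2Coord F :=
  aeval (fun p : Fin 2 × Fin 2 => C ((t p.1 : F) * (u p.2 : F)) * X p)


namespace PGL2Aux

variable (F : Type) [Field F]

/-- Evaluation at the matrix `[X+1, X; 1, 1]`, which has determinant 1. -/
def evH : GL2Coord F →+* Polynomial F :=
  eval₂Hom Polynomial.C (fun p =>
    if p.1 = 0 then (if p.2 = 0 then Polynomial.X + 1 else Polynomial.X) else 1)

lemma evH_det : evH F (detPoly F) = 1 := by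
  simp only [evH, detPoly, map_sub, map_mul, eval₂Hom_X']
  norm_num

lemma detPoly_ne_zero : detPoly F ≠ 0 := by
  intro h
  have := evH_det F
  rw [h, map_zero] at this
  exact zero_ne_one this

lemma algMap_inj : Function.Injective (algebraMap (GL2Coord F) (GL2Ring F)) :=
  IsLocalization.injective _ (powers_le_nonZeroDivisors_of_noZeroDivisors (detPoly_ne_zero F))

lemma mul_invDet : algebraMap (GL2Coord F) (GL2Ring F) (detPoly F) * invDet F = 1 :=
  IsLocalization.Away.mul_invSelf _

/-- The lift of `evH` to the localization. -/
def Φ : GL2Ring F →+* Polynomial F :=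
  IsLocalization.Away.lift (detPoly F) (g := evH F) (by rw [evH_det]; exact isUnit_one)

lemma Φ_alg (p : GL2Coord F) :
    Φ F (algebraMap (GL2Coord F) (GL2Ring F) p) = evH F p :=
  IsLocalization.Away.lift_eq _ _ _

lemma Φ_invDet : Φ F (invDet F) = 1 := by
  have := congrArg (Φ F) (mul_invDet F)
  rw [map_mul, Φ_alg, evH_det, one_mul, map_one] at this
  exact this

lemma Φ_bcOverDet : Φ F (bcOverDet F) = Polynomial.X := by
  rw [bcOverDet, map_mul, Φ_alg, Φ_invDet, mul_one, evH]
  simp [eval₂Hom_X']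

lemma transcendental_bcOverDet : Transcendental F (bcOverDet F) := by
  rw [transcendental_iff]
  intro q hq
  have h1 : (Φ F).comp ((Polynomial.aeval (bcOverDet F)).toRingHom) =
      RingHom.id (Polynomial F) := by
    apply Polynomial.ringHom_ext
    · intro a
      simp only [RingHom.coe_comp, Function.comp_apply, AlgHom.toRingHom_eq_coe,
        RingHom.coe_coe, Polynomial.aeval_C, RingHom.id_apply]
      rw [IsScalarTower.algebraMap_apply F (GL2Coord F) (GL2Ring F),
        MvPolynomial.algebraMap_eq, Φ_alg]
      simp [evH]
    · simp [Φ_bcOverDet]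
  have := congrArg (fun f => f q) (congrArg (fun g => g.toFun) h1)
  simp only [RingHom.toFun_eq_coe, RingHom.coe_comp, Function.comp_apply,
    AlgHom.toRingHom_eq_coe, RingHom.coe_coe, RingHom.id_apply] at this
  rw [hq, map_zero] at this
  exact this.symm

lemma scaleHom_X (t u : Fin 2 → Fˣ) (q : Fin 2 × Fin 2) :
    scaleHom F t u (X q) = C ((t q.1 : F) * (u q.2 : F)) * X q :=
  aeval_X _ _

lemma scaleHom_det (t u : Fin 2 → Fˣ) :
    scaleHom F t u (detPoly F) =
      C (((t 0 * t 1 * u 0 * u 1 : Fˣ) : F)) * detPoly F := by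
  simp only [detPoly, map_sub, map_mul, scaleHom_X, Units.val_mul]
  ring

/-- The weight by which the scaling acts on the monomial with exponents `e`. -/
def wt (t u : Fin 2 → Fˣ) (e : (Fin 2 × Fin 2) →₀ ℕ) : F :=
  ∏ q : Fin 2 × Fin 2, ((t q.1 : F) * (u q.2 : F)) ^ e q

lemma prod_fin22 {M : Type*} [CommMonoid M] (f : Fin 2 × Fin 2 → M) :
    ∏ q : Fin 2 × Fin 2, f q = f (0, 0) * f (0, 1) * (f (1, 0) * f (1, 1)) := by
  rw [Fintype.prod_prod_type]
  rw [Fin.prod_univ_two]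
  rw [Fin.prod_univ_two, Fin.prod_univ_two]

lemma wt_apply (t u : Fin 2 → Fˣ) (e : (Fin 2 × Fin 2) →₀ ℕ) :
    wt F t u e = ((t 0 : F) * (u 0 : F)) ^ e (0, 0) * (((t 0 : F) * (u 1 : F)) ^ e (0, 1)) *
      (((t 1 : F) * (u 0 : F)) ^ e (1, 0) * (((t 1 : F) * (u 1 : F)) ^ e (1, 1))) :=
  prod_fin22 _

lemma scaleHom_monomial (t u : Fin 2 → Fˣ) (e : (Fin 2 × Fin 2) →₀ ℕ) (a : F) :
    scaleHom F t u (monomial e a) = monomial e (wt F t u e * a) := by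
  rw [scaleHom, aeval_monomial, monomial_eq]
  rw [Finsupp.prod_fintype _ _ (fun i => pow_zero _),
    Finsupp.prod_fintype _ _ (fun i => pow_zero _)]
  simp only [mul_pow, ← C_pow]
  rw [Finset.prod_mul_distrib, ← map_prod, MvPolynomial.algebraMap_eq, map_mul, wt]
  rw [show (∏ q : Fin 2 × Fin 2, ((t q.1 : F) * (u q.2 : F)) ^ e q) =
      ∏ q : Fin 2 × Fin 2, ((t q.1 : F)) ^ e q * ((u q.2 : F)) ^ e q from
    Finset.prod_congr rfl (fun q _ => mul_pow _ _ _)]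
  ring

lemma coeff_scaleHom (t u : Fin 2 → Fˣ) (p : GL2Coord F) (e : (Fin 2 × Fin 2) →₀ ℕ) :
    coeff e (scaleHom F t u p) = wt F t u e * coeff e p := by
  conv_lhs => rw [p.as_sum]
  rw [map_sum]
  simp only [scaleHom_monomial]
  rw [coeff_sum]
  simp only [coeff_monomial]
  rw [Finset.sum_ite_eq' p.support e (fun v => wt F t u v * coeff v p)]
  by_cases he : e ∈ p.support
  · simp [he]
  · simp [he, notMem_support_iff.mp he]

lemma pow_eq_pow_nat {F : Type} [Field F] [Infinite F] {a b : ℕ}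
    (h : ∀ s : Fˣ, (s : F) ^ a = (s : F) ^ b) : a = b := by
  by_contra hne
  have hq : (Polynomial.X ^ a - Polynomial.X ^ b : Polynomial F) ≠ 0 := by
    intro h0
    rw [sub_eq_zero] at h0
    have h1 := congrArg Polynomial.natDegree h0
    rw [Polynomial.natDegree_X_pow, Polynomial.natDegree_X_pow] at h1
    exact hne h1
  have hfin : ({(0 : F)} ∪ {x : F | (Polynomial.X ^ a - Polynomial.X ^ b :
      Polynomial F).IsRoot x}).Finite :=
    (Set.finite_singleton 0).union (Polynomial.finite_setOf_isRoot hq)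
  obtain ⟨s, hs⟩ := hfin.infinite_compl.nonempty
  simp only [Set.mem_compl_iff, Set.mem_union, Set.mem_singleton_iff,
    Set.mem_setOf_eq, not_or] at hs
  refine hs.2 ?_
  have := h (Units.mk0 s hs.1)
  simp only [Units.val_mk0] at this
  simp [Polynomial.IsRoot, this]

lemma amC (a : F) :
    algebraMap (GL2Coord F) (GL2Ring F) (C a) = algebraMap F (GL2Ring F) a := by
  rw [IsScalarTower.algebraMap_apply F (GL2Coord F) (GL2Ring F),
    MvPolynomial.algebraMap_eq]

lemma ad_eq :
    algebraMap (GL2Coord F) (GL2Ring F) (X (0, 0) * X (1, 1)) * invDet F =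
      1 + bcOverDet F := by
  have h : algebraMap (GL2Coord F) (GL2Ring F)
      (X (0, 0) * X (1, 1) - X (0, 1) * X (1, 0)) * invDet F = 1 := mul_invDet F
  rw [map_sub, sub_mul] at h
  rw [bcOverDet, ← h]
  ring

lemma term_mem (c : F) {a n : ℕ} (h : a ≤ n) (e : (Fin 2 × Fin 2) →₀ ℕ)
    (h00 : e (0, 0) = a) (h01 : e (0, 1) = n - a) (h10 : e (1, 0) = n - a)
    (h11 : e (1, 1) = a) :
    algebraMap (GL2Coord F) (GL2Ring F) (monomial e c) * invDet F ^ n ∈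
      Algebra.adjoin F {bcOverDet F} := by
  have hmon : (monomial e c : GL2Coord F) =
      C c * (X (0, 0) * X (1, 1)) ^ a * (X (0, 1) * X (1, 0)) ^ (n - a) := by
    rw [monomial_eq, Finsupp.prod_fintype _ _ (fun i => pow_zero _), prod_fin22,
      h00, h01, h10, h11]
    ring
  have hn : invDet F ^ n = invDet F ^ a * invDet F ^ (n - a) := by
    rw [← pow_add, Nat.add_sub_cancel' h]
  rw [hmon, hn, map_mul, map_mul, map_pow, map_pow, amC]
  have heq : algebraMap F (GL2Ring F) c *
        algebraMap (GL2Coord F) (GL2Ring F) (X (0, 0) * X (1, 1)) ^ a *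
        algebraMap (GL2Coord F) (GL2Ring F) (X (0, 1) * X (1, 0)) ^ (n - a) *
        (invDet F ^ a * invDet F ^ (n - a)) =
      algebraMap F (GL2Ring F) c *
        (algebraMap (GL2Coord F) (GL2Ring F) (X (0, 0) * X (1, 1)) * invDet F) ^ a *
        (algebraMap (GL2Coord F) (GL2Ring F) (X (0, 1) * X (1, 0)) * invDet F) ^ (n - a) := by
    ring
  rw [heq, ad_eq]
  refine mul_mem (mul_mem (Subalgebra.algebraMap_mem _ c) (pow_mem ?_ a)) (pow_mem ?_ _)
  · exact add_mem (one_mem _) (Algebra.self_mem_adjoin_singleton F _)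
  · exact Algebra.self_mem_adjoin_singleton F _

lemma rep (x : GL2Ring F) :
    ∃ (p : GL2Coord F) (n : ℕ),
      x = algebraMap (GL2Coord F) (GL2Ring F) p * invDet F ^ n := by
  obtain ⟨⟨p, d⟩, hx⟩ := IsLocalization.surj (Submonoid.powers (detPoly F)) x
  obtain ⟨n, hn⟩ := d.2
  refine ⟨p, n, ?_⟩
  have hd : (d : GL2Coord F) = detPoly F ^ n := hn.symm
  have h1 : algebraMap (GL2Coord F) (GL2Ring F) (detPoly F) ^ n * invDet F ^ n = 1 := by
    rw [← mul_pow, mul_invDet, one_pow]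
  calc x = x * (algebraMap (GL2Coord F) (GL2Ring F) (detPoly F) ^ n * invDet F ^ n) := by
        rw [h1, mul_one]
    _ = (x * algebraMap (GL2Coord F) (GL2Ring F) (d : GL2Coord F)) * invDet F ^ n := by
        rw [hd, map_pow]; ring
    _ = algebraMap (GL2Coord F) (GL2Ring F) p * invDet F ^ n := by rw [hx]

section Scale

variable {F} {scale : (Fin 2 → Fˣ) → (Fin 2 → Fˣ) → (GL2Ring F →+* GL2Ring F)}

lemma scale_invDet
    (hscale : ∀ (t u : Fin 2 → Fˣ) (p : GL2Coord F),
      scale t u (algebraMap (GL2Coord F) (GL2Ring F) p) =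
        algebraMap (GL2Coord F) (GL2Ring F) (scaleHom F t u p))
    (t u : Fin 2 → Fˣ) :
    scale t u (invDet F) =
      algebraMap F (GL2Ring F) (((t 0 * t 1 * u 0 * u 1)⁻¹ : Fˣ) : F) * invDet F := by
  set c : Fˣ := t 0 * t 1 * u 0 * u 1 with hc
  set A := algebraMap F (GL2Ring F) (c : F) with hA
  set B := algebraMap F (GL2Ring F) ((c⁻¹ : Fˣ) : F) with hB
  have hAB : A * B = 1 := by
    rw [hA, hB, ← map_mul, Units.mul_inv, map_one]
  have key : A * algebraMap (GL2Coord F) (GL2Ring F) (detPoly F) * scale t u (invDet F)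
      = 1 := by
    have h2 := congrArg (scale t u) (mul_invDet F)
    rw [map_mul, map_one, hscale, scaleHom_det, map_mul, amC] at h2
    rw [← hc, ← hA] at h2
    rw [mul_assoc] at h2 ⊢
    exact h2
  calc scale t u (invDet F)
      = (B * invDet F * (A * algebraMap (GL2Coord F) (GL2Ring F) (detPoly F))) *
          scale t u (invDet F) := by
        rw [show B * invDet F * (A * algebraMap (GL2Coord F) (GL2Ring F) (detPoly F)) =
            (A * B) * (algebraMap (GL2Coord F) (GL2Ring F) (detPoly F) * invDet F) by ring,
          hAB, mul_invDet, one_mul, one_mul]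
    _ = B * invDet F * (A * algebraMap (GL2Coord F) (GL2Ring F) (detPoly F) *
          scale t u (invDet F)) := by ring
    _ = B * invDet F := by rw [key, mul_one]

lemma scaleHom_eq_of_invariant
    (hscale : ∀ (t u : Fin 2 → Fˣ) (p : GL2Coord F),
      scale t u (algebraMap (GL2Coord F) (GL2Ring F) p) =
        algebraMap (GL2Coord F) (GL2Ring F) (scaleHom F t u p))
    (t u : Fin 2 → Fˣ) (p : GL2Coord F) (n : ℕ)
    (hxi : scale t u (algebraMap (GL2Coord F) (GL2Ring F) p * invDet F ^ n)
         = algebraMap (GL2Coord F) (GL2Ring F) p * invDet F ^ n) :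
    scaleHom F t u p = C (((t 0 * t 1 * u 0 * u 1 : Fˣ) : F) ^ n) * p := by
  set c : Fˣ := t 0 * t 1 * u 0 * u 1 with hc
  set A := algebraMap F (GL2Ring F) (c : F) with hA
  set B := algebraMap F (GL2Ring F) ((c⁻¹ : Fˣ) : F) with hB
  have hAB : A * B = 1 := by
    rw [hA, hB, ← map_mul, Units.mul_inv, map_one]
  rw [map_mul, map_pow, hscale, scale_invDet hscale] at hxi
  rw [← hc, ← hB] at hxi
  set D := algebraMap (GL2Coord F) (GL2Ring F) (detPoly F) with hD
  have hDI : D * invDet F = 1 := mul_invDet F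
  have cancelI : ∀ x y : GL2Ring F, x * invDet F ^ n = y * invDet F ^ n → x = y := by
    intro x y hxy
    calc x = x * ((D * invDet F) ^ n) := by rw [hDI, one_pow, mul_one]
      _ = x * invDet F ^ n * D ^ n := by ring
      _ = y * invDet F ^ n * D ^ n := by rw [hxy]
      _ = y * ((D * invDet F) ^ n) := by ring
      _ = y := by rw [hDI, one_pow, mul_one]
  have e1 : algebraMap (GL2Coord F) (GL2Ring F) (scaleHom F t u p) * B ^ n
      = algebraMap (GL2Coord F) (GL2Ring F) p := by
    apply cancelI
    calc algebraMap (GL2Coord F) (GL2Ring F) (scaleHom F t u p) * B ^ n * invDet F ^ n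
        = algebraMap (GL2Coord F) (GL2Ring F) (scaleHom F t u p) *
            (B * invDet F) ^ n := by ring
      _ = algebraMap (GL2Coord F) (GL2Ring F) p * invDet F ^ n := hxi
  have hBA : B ^ n * A ^ n = 1 := by
    rw [← mul_pow, mul_comm B A, hAB, one_pow]
  apply algMap_inj F
  rw [map_mul, amC, map_pow, ← hA]
  calc algebraMap (GL2Coord F) (GL2Ring F) (scaleHom F t u p)
      = algebraMap (GL2Coord F) (GL2Ring F) (scaleHom F t u p) * (B ^ n * A ^ n) := by
        rw [hBA, mul_one]
    _ = (algebraMap (GL2Coord F) (GL2Ring F) (scaleHom F t u p) * B ^ n) * A ^ n := by ring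
    _ = algebraMap (GL2Coord F) (GL2Ring F) p * A ^ n := by rw [e1]
    _ = A ^ n * algebraMap (GL2Coord F) (GL2Ring F) p := by ring

lemma scale_fixes_adjoin
    (hscale : ∀ (t u : Fin 2 → Fˣ) (p : GL2Coord F),
      scale t u (algebraMap (GL2Coord F) (GL2Ring F) p) =
        algebraMap (GL2Coord F) (GL2Ring F) (scaleHom F t u p))
    {x : GL2Ring F} (hx : x ∈ Algebra.adjoin F {bcOverDet F}) (t u : Fin 2 → Fˣ) :
    scale t u x = x := by
  have hCa : ∀ a : F, scale t u (algebraMap F (GL2Ring F) a) =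
      algebraMap F (GL2Ring F) a := by
    intro a
    rw [← amC, hscale]
    congr 1
    rw [← MvPolynomial.algebraMap_eq]
    exact (scaleHom F t u).commutes a
  have hz : scale t u (bcOverDet F) = bcOverDet F := by
    have hsm : scaleHom F t u (X (0, 1) * X (1, 0)) =
        C (((t 0 * t 1 * u 0 * u 1 : Fˣ) : F)) * (X (0, 1) * X (1, 0)) := by
      simp only [map_mul, scaleHom_X, Units.val_mul]
      ring
    rw [bcOverDet, map_mul, hscale, scale_invDet hscale, hsm, map_mul, amC]
    have hone : ((t 0 * t 1 * u 0 * u 1 : Fˣ) : F) *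
        (((t 0 * t 1 * u 0 * u 1)⁻¹ : Fˣ) : F) = 1 := by
      exact Units.mul_inv _
    calc algebraMap F (GL2Ring F) ((t 0 * t 1 * u 0 * u 1 : Fˣ) : F) *
          algebraMap (GL2Coord F) (GL2Ring F) (X (0, 1) * X (1, 0)) *
          (algebraMap F (GL2Ring F) (((t 0 * t 1 * u 0 * u 1)⁻¹ : Fˣ) : F) * invDet F)
        = (algebraMap F (GL2Ring F) ((t 0 * t 1 * u 0 * u 1 : Fˣ) : F) *
            algebraMap F (GL2Ring F) (((t 0 * t 1 * u 0 * u 1)⁻¹ : Fˣ) : F)) *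
            (algebraMap (GL2Coord F) (GL2Ring F) (X (0, 1) * X (1, 0)) * invDet F) := by
          ring
      _ = algebraMap (GL2Coord F) (GL2Ring F) (X (0, 1) * X (1, 0)) * invDet F := by
          rw [← map_mul, hone, map_one, one_mul]
  rw [Algebra.adjoin_singleton_eq_range_aeval] at hx
  rcases (AlgHom.mem_range _).mp hx with ⟨q, rfl⟩
  clear hx
  induction q using Polynomial.induction_on with
  | C a => rw [Polynomial.aeval_C]; exact hCa a
  | add r s hr hs => rw [map_add, map_add, hr, hs]
  | monomial m a _ =>
    rw [map_mul, map_pow, Polynomial.aeval_C, Polynomial.aeval_X, map_mul, map_pow,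
      hCa, hz]

end Scale

end PGL2Aux

open PGL2Aux in
theorem pgl2_biinvariant_functions_are_affine_line
    (F : Type) [Field F] [Infinite F]   -- e.g. the function field F = k(X)
    (scale : (Fin 2 → Fˣ) → (Fin 2 → Fˣ) → (GL2Ring F →+* GL2Ring F))
    (hscale : ∀ (t u : Fin 2 → Fˣ) (p : GL2Coord F),
      scale t u (algebraMap (GL2Coord F) (GL2Ring F) p) =
        algebraMap (GL2Coord F) (GL2Ring F) (scaleHom F t u p)) :
    {x : GL2Ring F | ∀ t u : Fin 2 → Fˣ, scale t u x = x} =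
      (Algebra.adjoin F {bcOverDet F} : Subalgebra F (GL2Ring F)) ∧
    ∃ e : Polynomial F ≃ₐ[F] Algebra.adjoin F {bcOverDet F},
      e Polynomial.X =
        ⟨bcOverDet F, Algebra.self_mem_adjoin_singleton F _⟩ := by
  constructor
  · ext x
    simp only [Set.mem_setOf_eq, SetLike.mem_coe]
    constructor
    · intro hxinv
      obtain ⟨p, n, hx⟩ := rep F x
      subst hx
      have hp : ∀ t u : Fin 2 → Fˣ, scaleHom F t u p =
          C (((t 0 * t 1 * u 0 * u 1 : Fˣ) : F) ^ n) * p :=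
        fun t u => scaleHom_eq_of_invariant hscale t u p n (hxinv t u)
      have hrw : algebraMap (GL2Coord F) (GL2Ring F) p * invDet F ^ n
          = ∑ e ∈ p.support,
              algebraMap (GL2Coord F) (GL2Ring F) (monomial e (coeff e p)) *
                invDet F ^ n := by
        conv_lhs => rw [p.as_sum]
        rw [map_sum, Finset.sum_mul]
      rw [hrw]
      apply Subalgebra.sum_mem
      intro e he
      have hw : ∀ t u : Fin 2 → Fˣ,
          wt F t u e = ((t 0 * t 1 * u 0 * u 1 : Fˣ) : F) ^ n := by
        intro t u
        have h2 := congrArg (coeff e) (hp t u)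
        rw [coeff_scaleHom, coeff_C_mul] at h2
        exact mul_right_cancel₀ (mem_support_iff.mp he) h2
      have h1 : e (0, 0) + e (0, 1) = n := by
        apply pow_eq_pow_nat (F := F)
        intro s
        have h3 := hw ![s, 1] 1
        rw [wt_apply] at h3
        simpa [pow_add] using h3
      have h2 : e (1, 0) + e (1, 1) = n := by
        apply pow_eq_pow_nat (F := F)
        intro s
        have h3 := hw ![1, s] 1
        rw [wt_apply] at h3
        simpa [pow_add] using h3
      have h3 : e (0, 0) + e (1, 0) = n := by
        apply pow_eq_pow_nat (F := F)
        intro s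
        have h4 := hw 1 ![s, 1]
        rw [wt_apply] at h4
        simpa [pow_add] using h4
      have h4 : e (0, 1) + e (1, 1) = n := by
        apply pow_eq_pow_nat (F := F)
        intro s
        have h5 := hw 1 ![1, s]
        rw [wt_apply] at h5
        simpa [pow_add] using h5
      exact term_mem F _ (show e (0, 0) ≤ n by omega) e rfl (by omega) (by omega)
        (by omega)
    · intro hx t u
      exact scale_fixes_adjoin hscale hx t u
  · have hinj : Function.Injective
        (Polynomial.aeval (bcOverDet F) : Polynomial F →ₐ[F] GL2Ring F) :=
      transcendental_iff_injective.mp (transcendental_bcOverDet F)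
    refine ⟨(AlgEquiv.ofInjective _ hinj).trans
      (Subalgebra.equivOfEq _ _
        (Algebra.adjoin_singleton_eq_range_aeval F (bcOverDet F)).symm), ?_⟩
    apply Subtype.ext
    simp [Subalgebra.equivOfEq_apply, AlgEquiv.ofInjective_apply]
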